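/- Let m ≥ 3 be an integer, let θ ∈ ℝ^m be arbitrary, and let μ be the product measure on ℝ^m (functions Fin m → ℝ) whose i-th factor is the Gaussian measure gaussianReal (θ i) 1. Then ∫ 1/‖x‖² dμ(x) ≤ 1, where ‖x‖² = Σᵢ xᵢ² is the squared Euclidean norm. -/

import Mathlib

open MeasureTheory ProbabilityTheory
open scoped ENNReal NNReal
open Real Set Filter


lemma my_lintegral_pi_prod : ∀ (n : ℕ) (ν : Fin n → Measure ℝ), (∀ i, SigmaFinite (ν i)) →
    ∀ (f : Fin n → ℝ → ℝ≥0∞), (∀ i, Measurable (f i)) →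
    ∫⁻ x, ∏ i, f i (x i) ∂Measure.pi ν = ∏ i, ∫⁻ y, f i y ∂ν i := by
  intro n
  induction n with
  | zero =>
    intro ν hν f hf
    haveI := hν
    rw [Measure.pi_of_empty ν (fun i => i.elim0)]
    simp [lintegral_dirac]
  | succ n ih =>
    intro ν hν f hf
    haveI := hν
    have hmp := measurePreserving_piFinSuccAbove ν 0
    have hG : Measurable (fun p : ℝ × (Fin n → ℝ) => f 0 p.1 * ∏ j, f j.succ (p.2 j)) := by
      exact ((hf 0).comp measurable_fst).mul
        (Finset.measurable_prod _ fun j _ => (hf j.succ).comp ((measurable_pi_apply j).comp measurable_snd))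
    have heq : ∫⁻ x, ∏ i, f i (x i) ∂Measure.pi ν
        = ∫⁻ p, f 0 p.1 * ∏ j, f j.succ (p.2 j)
            ∂((ν 0).prod (Measure.pi fun j => ν (Fin.succAbove 0 j))) := by
      rw [← hmp.lintegral_comp hG]
      congr 1
      funext x
      simp [MeasurableEquiv.piFinSuccAbove, Fin.prod_univ_succ, Fin.zero_succAbove, Fin.tail]
    rw [heq]
    have hpi : (Measure.pi fun j => ν (Fin.succAbove 0 j)) = Measure.pi fun j : Fin n => ν j.succ := by
      simp [Fin.zero_succAbove]
    rw [hpi]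
    have hswap := lintegral_prod_mul (μ := ν 0) (ν := Measure.pi fun j : Fin n => ν j.succ)
      (f := f 0) (g := fun y : Fin n → ℝ => ∏ j, f j.succ (y j)) ((hf 0).aemeasurable)
      ((Finset.measurable_prod _ fun j _ => (hf j.succ).comp (measurable_pi_apply j)).aemeasurable)
    rw [hswap, ih _ (fun j => inferInstance) _ (fun j => hf j.succ), Fin.prod_univ_succ]


lemma onedim_bound (c : ℝ) {t : ℝ} (ht : 0 ≤ t) :
    ∫⁻ y, ENNReal.ofReal (rexp (-(t * y ^ 2))) ∂gaussianReal c 1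
      ≤ ENNReal.ofReal ((1 + 2 * t) ^ (-(1/2) : ℝ)) := by
  have ha : (0:ℝ) < 1 + 2 * t := by linarith
  have hmg : Measurable fun y : ℝ => ENNReal.ofReal (rexp (-(t * y ^ 2))) := by fun_prop
  rw [gaussianReal_of_var_ne_zero c one_ne_zero,
    lintegral_withDensity_eq_lintegral_mul _ (measurable_gaussianPDF c 1) hmg]
  have hle : ∀ y : ℝ, (gaussianPDF c 1 * fun y => ENNReal.ofReal (rexp (-(t * y ^ 2)))) y
      ≤ ENNReal.ofReal ((√(2 * π))⁻¹ * rexp (-((1 + 2*t) / 2) * (y - c / (1 + 2*t)) ^ 2)) := by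
    intro y
    simp only [Pi.mul_apply, gaussianPDF, ← ENNReal.ofReal_mul (gaussianPDFReal_nonneg c 1 y)]
    apply ENNReal.ofReal_le_ofReal
    rw [gaussianPDFReal]
    simp only [NNReal.coe_one, mul_one]
    rw [mul_assoc, ← Real.exp_add]
    apply mul_le_mul_of_nonneg_left _ (by positivity)
    apply Real.exp_le_exp.mpr
    have hkey : -(y - c)^2/2 + (-(t * y^2)) + ((1 + 2*t)/2) * (y - c / (1 + 2*t))^2
        = -(t * c^2 / (1 + 2*t)) := by
      field_simp
      ring
    have hnn : 0 ≤ t * c^2 / (1 + 2*t) := by positivity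
    linarith [hkey]
  refine le_trans (lintegral_mono hle) ?_
  have hint : Integrable (fun y : ℝ =>
      (√(2 * π))⁻¹ * rexp (-((1 + 2*t) / 2) * (y - c / (1 + 2*t)) ^ 2)) := by
    exact ((integrable_exp_neg_mul_sq (by positivity : (0:ℝ) < (1 + 2*t) / 2)).comp_sub_right
      (c / (1 + 2*t))).const_mul _
  rw [← ofReal_integral_eq_lintegral_ofReal hint (ae_of_all _ fun y => by positivity)]
  apply ENNReal.ofReal_le_ofReal
  rw [integral_const_mul]
  have h1 : ∫ y : ℝ, rexp (-((1 + 2*t) / 2) * (y - c / (1 + 2*t)) ^ 2) = √(π / ((1 + 2*t)/2)) := by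
    rw [integral_sub_right_eq_self (μ := volume)
      (fun y : ℝ => rexp (-((1 + 2*t) / 2) * y ^ 2)) (c / (1 + 2*t))]
    exact integral_gaussian _
  rw [h1, Real.rpow_neg ha.le, ← Real.sqrt_eq_rpow]
  have h2 : π / ((1 + 2*t)/2) = (2 * π) / (1 + 2*t) := by field_simp
  rw [h2, Real.sqrt_div (by positivity) _]
  have h3 : √(2 * π) ≠ 0 := by positivity
  rw [div_eq_mul_inv, ← mul_assoc, inv_mul_cancel₀ h3, one_mul]

lemma inv_eq_lintegral_exp {s : ℝ} (hs : 0 < s) :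
    ENNReal.ofReal s⁻¹ = ∫⁻ t in Ioi (0:ℝ), ENNReal.ofReal (rexp (-(t * s))) := by
  have hderiv : ∀ x ∈ Ici (0:ℝ),
      HasDerivAt (fun u : ℝ => -s⁻¹ * rexp (-(u * s))) (rexp (-(x * s))) x := by
    intro x _
    have h1 : HasDerivAt (fun u : ℝ => -(u * s)) (-s) x := by
      have := ((hasDerivAt_id x).mul_const s).neg
      rw [one_mul] at this
      exact this
    have h2 := h1.exp.const_mul (-s⁻¹)
    refine h2.congr_deriv ?_
    field_simp
  have hlim : Tendsto (fun u : ℝ => -s⁻¹ * rexp (-(u * s))) atTop (nhds 0) := by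
    have h1 : Tendsto (fun u : ℝ => -(u * s)) atTop atBot :=
      tendsto_neg_atTop_atBot.comp (tendsto_id.atTop_mul_const hs)
    simpa using (Real.tendsto_exp_atBot.comp h1).const_mul (-s⁻¹)
  have hpos : ∀ x ∈ Ioi (0:ℝ), 0 ≤ rexp (-(x * s)) := fun x _ => (Real.exp_pos _).le
  have hint := integral_Ioi_of_hasDerivAt_of_nonneg' hderiv hpos hlim
  have hintg := integrableOn_Ioi_deriv_of_nonneg' hderiv hpos hlim
  rw [← ofReal_integral_eq_lintegral_ofReal hintg
    (ae_of_all _ fun y => (Real.exp_pos _).le), hint]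
  norm_num

lemma tail_bound : ∫⁻ t in Ioi (0:ℝ), ENNReal.ofReal ((1 + 2*t) ^ (-(3/2) : ℝ)) = 1 := by
  have hderiv : ∀ x ∈ Ici (0:ℝ), HasDerivAt (fun u : ℝ => -((1 + 2*u) ^ (-(1/2) : ℝ)))
      (2 * ((-(1/2) : ℝ) * (1 + 2*x) ^ ((-(1/2) : ℝ) - 1)) * (-1)) x := by
    intro x hx
    have hb : (0:ℝ) < 1 + 2*x := by
      have : (0:ℝ) ≤ x := hx
      linarith
    have h1 : HasDerivAt (fun u : ℝ => 1 + 2*u) 2 x := by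
      simpa using ((hasDerivAt_id x).const_mul (2:ℝ)).const_add 1
    have h2 := (Real.hasDerivAt_rpow_const (x := 1 + 2*x) (p := (-(1/2) : ℝ))
      (Or.inl hb.ne')).comp x h1
    have h3 := h2.neg
    refine h3.congr_deriv ?_
    ring
  have heq : ∀ x ∈ Ici (0:ℝ), (2 * ((-(1/2) : ℝ) * (1 + 2*x) ^ ((-(1/2) : ℝ) - 1)) * (-1))
      = (1 + 2*x) ^ (-(3/2) : ℝ) := by
    intro x hx
    rw [show ((-(1/2) : ℝ) - 1) = (-(3/2) : ℝ) by norm_num]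
    ring
  have hderiv' : ∀ x ∈ Ici (0:ℝ), HasDerivAt (fun u : ℝ => -((1 + 2*u) ^ (-(1/2) : ℝ)))
      ((1 + 2*x) ^ (-(3/2) : ℝ)) x := by
    intro x hx
    rw [← heq x hx]; exact hderiv x hx
  have hlim : Tendsto (fun u : ℝ => -((1 + 2*u) ^ (-(1/2) : ℝ))) atTop (nhds 0) := by
    have h1 : Tendsto (fun u : ℝ => 1 + 2*u) atTop atTop :=
      tendsto_atTop_add_const_left _ _ ((tendsto_id (α := ℝ)).const_mul_atTop two_pos)
    have h2 := (tendsto_rpow_neg_atTop (y := (1/2:ℝ)) (by norm_num)).comp h1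
    simpa using h2.neg
  have hpos : ∀ x ∈ Ioi (0:ℝ), 0 ≤ (1 + 2*x) ^ (-(3/2) : ℝ) := by
    intro x hx
    have : (0:ℝ) < x := hx
    exact Real.rpow_nonneg (by linarith) _
  have hint := integral_Ioi_of_hasDerivAt_of_nonneg' hderiv' hpos hlim
  have hintg := integrableOn_Ioi_deriv_of_nonneg' hderiv' hpos hlim
  rw [← ofReal_integral_eq_lintegral_ofReal hintg
    ((ae_restrict_mem measurableSet_Ioi).mono hpos), hint]
  norm_num

theorem integral_inv_normSq_noncentral_le_one
    (m : ℕ) (hm : 3 ≤ m) (θ : Fin m → ℝ)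
    (μ : Measure (Fin m → ℝ))
    (hμ : μ = Measure.pi fun i : Fin m => gaussianReal (θ i) 1) :
    ∫ x, (∑ i, (x i) ^ 2)⁻¹ ∂μ ≤ 1 := by
  subst hμ
  set ν : Fin m → Measure ℝ := fun i => gaussianReal (θ i) 1 with hν
  haveI : NeZero m := ⟨by omega⟩
  have hSm : Measurable fun x : Fin m → ℝ => ∑ i, x i ^ 2 :=
    Finset.measurable_sum _ fun i _ => (measurable_pi_apply i).pow_const 2
  have hae : ∀ᵐ x ∂Measure.pi ν, 0 < ∑ i, x i ^ 2 := by
    rw [ae_iff]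
    have hsub : {x : Fin m → ℝ | ¬ 0 < ∑ i, x i ^ 2}
        ⊆ Set.pi univ fun _ : Fin m => ({0} : Set ℝ) := by
      intro x hx
      simp only [mem_setOf_eq, not_lt] at hx
      have hz : ∑ i, x i ^ 2 = 0 :=
        le_antisymm hx (Finset.sum_nonneg fun i _ => sq_nonneg _)
      intro i _
      have h2 := (Finset.sum_eq_zero_iff_of_nonneg
        (fun i _ => sq_nonneg (x i))).mp hz i (Finset.mem_univ i)
      simpa using pow_eq_zero_iff (two_ne_zero) |>.mp h2
    refine measure_mono_null hsub ?_
    rw [Measure.pi_pi]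
    have hz : ∀ i : Fin m, ν i ({0} : Set ℝ) = 0 := by
      intro i
      rw [hν]
      rw [gaussianReal_apply _ one_ne_zero]
      exact setLIntegral_measure_zero _ _ (measure_singleton 0)
    exact Finset.prod_eq_zero (Finset.mem_univ (0 : Fin m)) (hz 0)
  have hnn : ∀ᵐ x ∂Measure.pi ν, (0:ℝ) ≤ (∑ i, x i ^ 2)⁻¹ :=
    ae_of_all _ fun x => inv_nonneg.mpr (Finset.sum_nonneg fun i _ => sq_nonneg _)
  rw [integral_eq_lintegral_of_nonneg_ae hnn hSm.inv.aestronglyMeasurable]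
  have key : ∫⁻ x, ENNReal.ofReal ((∑ i, x i ^ 2)⁻¹) ∂Measure.pi ν ≤ 1 := by
    calc ∫⁻ x, ENNReal.ofReal ((∑ i, x i ^ 2)⁻¹) ∂Measure.pi ν
        = ∫⁻ x, (∫⁻ t in Ioi (0:ℝ),
            ENNReal.ofReal (rexp (-(t * ∑ i, x i ^ 2)))) ∂Measure.pi ν := by
          refine lintegral_congr_ae (hae.mono fun x hx => ?_)
          exact inv_eq_lintegral_exp hx
      _ = ∫⁻ t in Ioi (0:ℝ), ∫⁻ x,
            ENNReal.ofReal (rexp (-(t * ∑ i, x i ^ 2))) ∂Measure.pi ν := by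
          apply lintegral_lintegral_swap
          apply Measurable.aemeasurable
          fun_prop
      _ ≤ ∫⁻ t in Ioi (0:ℝ), ENNReal.ofReal ((1 + 2*t) ^ (-(3/2):ℝ)) := by
          refine lintegral_mono_ae ((ae_restrict_mem measurableSet_Ioi).mono fun t ht => ?_)
          have ht' : (0:ℝ) < t := ht
          have hsplit : ∀ x : Fin m → ℝ, ENNReal.ofReal (rexp (-(t * ∑ i, x i ^ 2)))
              = ∏ i, ENNReal.ofReal (rexp (-(t * x i ^ 2))) := by
            intro x
            rw [← ENNReal.ofReal_prod_of_nonneg (fun i _ => (Real.exp_pos _).le),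
              ← Real.exp_sum]
            congr 2
            rw [Finset.mul_sum, ← Finset.sum_neg_distrib]
          simp_rw [hsplit]
          rw [my_lintegral_pi_prod m ν (fun i => inferInstance)
            (fun i y => ENNReal.ofReal (rexp (-(t * y ^ 2)))) (fun i => by fun_prop)]
          have hb : (0:ℝ) ≤ (1 + 2*t) ^ (-(1/2):ℝ) := Real.rpow_nonneg (by linarith) _
          calc ∏ i, ∫⁻ y, ENNReal.ofReal (rexp (-(t * y ^ 2))) ∂ν i
              ≤ ∏ _i : Fin m, ENNReal.ofReal ((1 + 2*t) ^ (-(1/2):ℝ)) :=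
                Finset.prod_le_prod' fun i _ => onedim_bound (θ i) ht'.le
            _ = ENNReal.ofReal ((1 + 2*t) ^ (-(1/2):ℝ)) ^ m := by
                rw [Finset.prod_const, Finset.card_univ, Fintype.card_fin]
            _ = ENNReal.ofReal (((1 + 2*t) ^ (-(1/2):ℝ)) ^ m) := by
                rw [← ENNReal.ofReal_pow hb]
            _ ≤ ENNReal.ofReal ((1 + 2*t) ^ (-(3/2):ℝ)) := by
                apply ENNReal.ofReal_le_ofReal
                rw [← Real.rpow_natCast ((1 + 2*t) ^ (-(1/2):ℝ)) m,
                  ← Real.rpow_mul (by linarith)]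
                apply Real.rpow_le_rpow_of_exponent_le (by linarith)
                have h3 : (3:ℝ) ≤ (m:ℝ) := by exact_mod_cast hm
                linarith
      _ = 1 := tail_bound
  calc (∫⁻ x, ENNReal.ofReal ((∑ i, x i ^ 2)⁻¹) ∂Measure.pi ν).toReal
      ≤ (1 : ℝ≥0∞).toReal := ENNReal.toReal_mono ENNReal.one_ne_top key
    _ = 1 := by simp
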